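/- Let 0 < α < 1 with a_i and p_n as in the L1 scheme. Then Γ(2-α) Σ_{j=1}^{n} p_{n-j} ≤ n^α / Γ(1+α) for every n ≥ 1. -/

import Mathlib

open MeasureTheory intervalIntegral

noncomputable def L1a (α : ℝ) (i : ℕ) : ℝ :=
  ((i : ℝ) + 1) ^ (1 - α) - (i : ℝ) ^ (1 - α)

noncomputable def L1p (α : ℝ) : ℕ → ℝ
  | 0 => 1
  | n + 1 =>
      ∑ j ∈ (Finset.range (n + 1)).attach,
        (L1a α (n - j.1) - L1a α (n + 1 - j.1)) * L1p α j.1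
termination_by n => n
decreasing_by exact Finset.mem_range.mp j.2

lemma L1p_zero (α : ℝ) : L1p α 0 = 1 := L1p.eq_1 α

lemma L1p_succ (α : ℝ) (n : ℕ) : L1p α (n+1) = ∑ j ∈ Finset.range (n + 1),
    (L1a α (n - j) - L1a α (n + 1 - j)) * L1p α j := by
  rw [L1p.eq_2]
  exact Finset.sum_attach (Finset.range (n+1))
    (fun j => (L1a α (n - j) - L1a α (n + 1 - j)) * L1p α j)

variable {α : ℝ}

lemma L1a_zero (hα1 : α < 1) : L1a α 0 = 1 := by
  simp [L1a, Real.zero_rpow (by intro h; linarith [sub_eq_zero.mp h] : (1:ℝ) - α ≠ 0)]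

lemma L1a_pos (hα1 : α < 1) (i : ℕ) : 0 < L1a α i := by
  have := Real.rpow_lt_rpow (x := (i:ℝ)) (y := (i:ℝ)+1) (by positivity) (by linarith)
    (by linarith : (0:ℝ) < 1 - α)
  simpa [L1a, sub_pos] using this

lemma L1a_anti (hα : 0 < α) (hα1 : α < 1) (i : ℕ) : L1a α (i+1) ≤ L1a α i := by
  have hc := Real.concaveOn_rpow (by linarith : (0:ℝ) ≤ 1 - α) (by linarith : (1:ℝ) - α ≤ 1)
  have h := hc.2 (Set.mem_Ici.mpr (by positivity : (0:ℝ) ≤ (i:ℝ)))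
    (Set.mem_Ici.mpr (by positivity : (0:ℝ) ≤ (i:ℝ)+2))
    (by norm_num : (0:ℝ) ≤ 1/2) (by norm_num : (0:ℝ) ≤ 1/2)
    (by norm_num : (1:ℝ)/2 + 1/2 = 1)
  simp only [smul_eq_mul] at h
  have h2 : (1/2 : ℝ) * (i:ℝ) + (1/2 : ℝ) * ((i:ℝ)+2) = (i:ℝ)+1 := by ring
  rw [h2] at h
  simp only [L1a]
  push_cast
  have e : ((i:ℝ)+1+1) = (i:ℝ)+2 := by ring
  rw [e]
  linarith

lemma L1p_nonneg (hα : 0 < α) (hα1 : α < 1) : ∀ n, 0 ≤ L1p α n := by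
  intro n
  induction n using Nat.strong_induction_on with
  | _ n ih =>
    match n with
    | 0 => rw [L1p_zero]; norm_num
    | n + 1 =>
      rw [L1p_succ]
      apply Finset.sum_nonneg
      intro j hj
      have hj' : j ≤ n := Nat.lt_succ_iff.mp (Finset.mem_range.mp hj)
      have : n + 1 - j = (n - j) + 1 := by omega
      rw [this]
      exact mul_nonneg (sub_nonneg.mpr (L1a_anti hα hα1 _)) (ih j (by omega))

lemma conv_one (hα1 : α < 1) : ∀ m, ∑ j ∈ Finset.range (m+1), L1a α (m - j) * L1p α j = 1 := by
  intro m
  induction m with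
  | zero => simp [L1p_zero, L1a_zero hα1]
  | succ m ih =>
    rw [Finset.sum_range_succ, L1p_succ]
    have e1 : m + 1 - (m+1) = 0 := by omega
    rw [e1, L1a_zero hα1, one_mul, ← ih]
    rw [← Finset.sum_add_distrib]
    apply Finset.sum_congr rfl
    intro j hj
    ring

-- exchange identity
lemma inner_one (hα1 : α < 1) (n k : ℕ) (hk : 1 ≤ k) (hkn : k ≤ n) :
    ∑ j ∈ Finset.Icc k n, L1p α (n - j) * L1a α (j - k) = 1 := by
  have h1 : ∑ j ∈ Finset.Icc k n, L1p α (n - j) * L1a α (j - k)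
      = ∑ i ∈ Finset.range (n - k + 1), L1p α ((n-k) - i) * L1a α i := by
    apply Finset.sum_nbij' (fun j => j - k) (fun i => k + i)
    · intro j hj; simp only [Finset.mem_Icc] at hj; simp [Finset.mem_range]; omega
    · intro i hi; simp only [Finset.mem_range] at hi; simp [Finset.mem_Icc]; omega
    · intro j hj; simp only [Finset.mem_Icc] at hj; omega
    · intro i hi; simp only [Finset.mem_range] at hi; omega
    · intro j hj; simp only [Finset.mem_Icc] at hj
      congr 2 <;> omega
  rw [h1, ← Finset.sum_range_reflect]
  rw [← conv_one hα1 (n - k)]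
  apply Finset.sum_congr rfl
  intro i hi
  simp only [Finset.mem_range] at hi
  have e1 : n - k + 1 - 1 - i = (n - k) - i := by omega
  have e2 : (n - k) - ((n-k) - i) = i := by omega
  rw [e1, e2, mul_comm]

lemma exchange (hα1 : α < 1) (n : ℕ) (hn : 1 ≤ n) (b : ℕ → ℝ) :
    ∑ j ∈ Finset.Icc 1 n, L1p α (n - j) * ∑ k ∈ Finset.Icc 1 j, L1a α (j - k) * b k
      = ∑ k ∈ Finset.Icc 1 n, b k := by
  have h1 : ∀ j, L1p α (n - j) * ∑ k ∈ Finset.Icc 1 j, L1a α (j - k) * b k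
      = ∑ k ∈ Finset.Icc 1 j, L1p α (n - j) * L1a α (j - k) * b k := by
    intro j; rw [Finset.mul_sum]; apply Finset.sum_congr rfl; intros; ring
  simp_rw [h1]
  rw [Finset.sum_comm' (t' := Finset.Icc 1 n) (s' := fun k => Finset.Icc k n)
    (by intro j k; simp only [Finset.mem_Icc]; omega)]
  apply Finset.sum_congr rfl
  intro k hk
  simp only [Finset.mem_Icc] at hk
  rw [← Finset.sum_mul, inner_one hα1 n k hk.1 hk.2, one_mul]

lemma int_g (hα : 0 < α) (hα1 : α < 1) (a b : ℝ) :
    ∫ s in a..b, (1-α) * s^(-α) = b^(1-α) - a^(1-α) := by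
  rw [intervalIntegral.integral_const_mul,
    integral_rpow (Or.inl (by linarith : (-1:ℝ) < -α)),
    show (-α + 1 : ℝ) = 1 - α from by ring, mul_comm, div_mul_cancel₀]
  intro h; linarith [sub_eq_zero.mp h]

lemma int_f (hα : 0 < α) (hα1 : α < 1) (a b : ℝ) :
    ∫ u in a..b, α * u^(α-1) = b^α - a^α := by
  rw [intervalIntegral.integral_const_mul,
    integral_rpow (Or.inl (by linarith : (-1:ℝ) < α-1)),
    show (α - 1 + 1 : ℝ) = α from by ring, mul_comm, div_mul_cancel₀]
  exact hα.ne'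

lemma beta_eval (hα : 0 < α) (hα1 : α < 1) :
    ∫ x in (0:ℝ)..1, x^(α-1) * (1-x)^(-α) = Real.Gamma α * Real.Gamma (1-α) := by
  have hre : 0 < (α : ℂ).re := by simpa using hα
  have hre2 : 0 < ((1:ℂ) - (α:ℂ)).re := by
    simpa using (by linarith : (0:ℝ) < 1 - α)
  have h := Complex.Gamma_mul_Gamma_eq_betaIntegral hre hre2
  rw [show (α:ℂ) + ((1:ℂ) - (α:ℂ)) = 1 from by ring, Complex.Gamma_one, one_mul] at h
  have h2 : Complex.betaIntegral (α:ℂ) ((1:ℂ)-(α:ℂ))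
      = ((∫ x in (0:ℝ)..1, x^(α-1) * (1-x)^(-α) : ℝ) : ℂ) := by
    rw [Complex.betaIntegral, ← intervalIntegral.integral_ofReal]
    apply intervalIntegral.integral_congr
    intro x hx
    rw [Set.uIcc_of_le (by norm_num : (0:ℝ) ≤ 1)] at hx
    obtain ⟨hx0, hx1⟩ := hx
    rw [show ((α:ℂ) - 1) = ((α - 1 : ℝ) : ℂ) from by push_cast; ring,
        show ((1:ℂ) - (α:ℂ) - 1) = ((-α : ℝ) : ℂ) from by push_cast; ring]
    simp only [← Complex.ofReal_one, ← Complex.ofReal_sub]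
    rw [← Complex.ofReal_cpow hx0, ← Complex.ofReal_cpow (by linarith)]
    push_cast
    ring
  rw [h2] at h
  have h3 : ((Real.Gamma α * Real.Gamma (1-α) : ℝ) : ℂ)
      = ((∫ x in (0:ℝ)..1, x^(α-1) * (1-x)^(-α) : ℝ) : ℂ) := by
    rw [← h, Complex.ofReal_mul, Complex.Gamma_ofReal,
      show ((1:ℂ) - (α:ℂ)) = ((1 - α : ℝ) : ℂ) from by push_cast; ring, Complex.Gamma_ofReal]
  exact_mod_cast h3.symm

lemma scale (hα : 0 < α) (hα1 : α < 1) (j : ℕ) (hj : 1 ≤ j) :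
    ∫ u in (0:ℝ)..(j:ℝ), u^(α-1) * ((j:ℝ)-u)^(-α)
      = ∫ x in (0:ℝ)..1, x^(α-1) * (1-x)^(-α) := by
  have hJ : (0:ℝ) < (j:ℝ) := by exact_mod_cast hj
  have h1 := intervalIntegral.smul_integral_comp_mul_left
    (f := fun u => u^(α-1) * ((j:ℝ)-u)^(-α)) (a := (0:ℝ)) (b := (1:ℝ)) (j:ℝ)
  rw [mul_zero, mul_one] at h1
  have h2 : ∀ x ∈ Set.uIcc (0:ℝ) 1, (fun u => u^(α-1) * ((j:ℝ)-u)^(-α)) ((j:ℝ)*x)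
      = ((j:ℝ))⁻¹ • (x^(α-1) * (1-x)^(-α)) := by
    intro x hx
    rw [Set.uIcc_of_le (by norm_num : (0:ℝ) ≤ 1)] at hx
    obtain ⟨hx0, hx1⟩ := hx
    simp only [smul_eq_mul]
    have e1 : (j:ℝ) - (j:ℝ)*x = (j:ℝ)*(1-x) := by ring
    rw [e1, Real.mul_rpow hJ.le hx0, Real.mul_rpow hJ.le (by linarith : (0:ℝ) ≤ 1-x)]
    have e2 : (j:ℝ)^(α-1) * (j:ℝ)^(-α) = ((j:ℝ))⁻¹ := by
      rw [← Real.rpow_add hJ, show (α - 1 + -α : ℝ) = -1 from by ring, Real.rpow_neg_one]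
    calc (j:ℝ)^(α-1) * x^(α-1) * ((j:ℝ)^(-α) * (1-x)^(-α))
        = ((j:ℝ)^(α-1) * (j:ℝ)^(-α)) * (x^(α-1) * (1-x)^(-α)) := by ring
      _ = ((j:ℝ))⁻¹ * (x^(α-1) * (1-x)^(-α)) := by rw [e2]
  rw [intervalIntegral.integral_congr h2, intervalIntegral.integral_smul, smul_smul,
    mul_inv_cancel₀ hJ.ne', one_smul] at h1
  exact h1.symm

lemma integrable_fg (hα : 0 < α) (hα1 : α < 1) (j : ℕ) (hj : 1 ≤ j) :
    IntervalIntegrable (fun u => u^(α-1) * ((j:ℝ)-u)^(-α)) volume 0 (j:ℝ) := by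
  have hJ : (0:ℝ) < (j:ℝ) := by exact_mod_cast hj
  have I1 : IntervalIntegrable (fun u => u^(α-1) * ((j:ℝ)-u)^(-α)) volume 0 ((j:ℝ)/2) := by
    apply IntervalIntegrable.mul_continuousOn (intervalIntegrable_rpow' (by linarith))
    intro u hu
    rw [Set.uIcc_of_le (by linarith : (0:ℝ) ≤ (j:ℝ)/2)] at hu
    have hne : (j:ℝ) - u ≠ 0 := by
      have := hu.2; intro h; rw [sub_eq_zero] at h; rw [← h] at this; linarith
    exact ((Real.continuousAt_rpow_const _ _ (Or.inl hne)).comp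
      ((continuous_const.sub continuous_id).continuousAt)).continuousWithinAt
  have I2 : IntervalIntegrable (fun u => u^(α-1) * ((j:ℝ)-u)^(-α)) volume ((j:ℝ)/2) (j:ℝ) := by
    have base : IntervalIntegrable (fun s : ℝ => s^(-α)) volume ((j:ℝ) - (j:ℝ)/2) ((j:ℝ) - (j:ℝ)) :=
      intervalIntegrable_rpow' (by linarith)
    have comp := base.comp_sub_left (j:ℝ)
    rw [show (j:ℝ) - ((j:ℝ) - (j:ℝ)/2) = (j:ℝ)/2 from by ring,
        show (j:ℝ) - ((j:ℝ) - (j:ℝ)) = (j:ℝ) from by ring] at comp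
    apply IntervalIntegrable.continuousOn_mul comp
    intro u hu
    rw [Set.uIcc_of_le (by linarith : (j:ℝ)/2 ≤ (j:ℝ))] at hu
    have hne : u ≠ 0 := by have := hu.1; intro h; rw [h] at this; linarith
    exact (Real.continuousAt_rpow_const _ _ (Or.inl hne)).continuousWithinAt
  exact I1.trans I2

lemma slope_gt (hα : 0 < α) (hα1 : α < 1) {M J : ℝ} (hM0 : 0 ≤ M) (hMJ : M + 1 ≤ J) :
    (1-α) * J^(-α) < (M+1)^(1-α) - M^(1-α) := by
  have hcont : ContinuousOn (fun x : ℝ => x^(1-α)) (Set.Icc M (M+1)) := fun x _ =>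
    (Real.continuousAt_rpow_const x (1-α) (Or.inr (by linarith))).continuousWithinAt
  have hderiv : ∀ x ∈ Set.Ioo M (M+1),
      HasDerivAt (fun x : ℝ => x^(1-α)) ((1-α) * x^(1-α-1)) x := fun x hx =>
    Real.hasDerivAt_rpow_const (Or.inl (by have := hx.1; intro h; rw [h] at this; linarith))
  obtain ⟨ξ, hξmem, hξ⟩ := exists_hasDerivAt_eq_slope (fun x : ℝ => x^(1-α)) _
    (by linarith : M < M+1) hcont hderiv
  have hξpos : 0 < ξ := lt_of_le_of_lt hM0 hξmem.1
  rw [show (1 - α - 1 : ℝ) = -α from by ring] at hξ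
  rw [show (M+1-M : ℝ) = 1 from by ring, div_one] at hξ
  rw [← hξ]
  have h1 : ξ < J := by have := hξmem.2; linarith
  have h2 : J^(-α) < ξ^(-α) := by
    rw [Real.rpow_neg (by linarith : (0:ℝ) ≤ J), Real.rpow_neg hξpos.le]
    exact inv_strictAnti₀ (Real.rpow_pos_of_pos hξpos α)
      (Real.rpow_lt_rpow hξpos.le h1 hα)
  have h3 : (0:ℝ) < 1 - α := by linarith
  nlinarith

lemma piece (hα : 0 < α) (hα1 : α < 1) (j k : ℕ) (hk : 1 ≤ k) (hkj : k ≤ j) :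
    ∫ u in ((k:ℝ)-1)..(k:ℝ), (α * u^(α-1)) * ((1-α) * ((j:ℝ)-u)^(-α))
      ≤ ((k:ℝ)^α - ((k:ℝ)-1)^α) * L1a α (j - k) := by
  set J := (j:ℝ) with hJdef
  set K := (k:ℝ) with hKdef
  have hK1 : (1:ℝ) ≤ K := by rw [hKdef]; exact_mod_cast hk
  have hKJ : K ≤ J := by rw [hKdef, hJdef]; exact_mod_cast hkj
  have hJpos : 0 < J := by linarith
  set A := L1a α (j-k) with hAdef
  set M := J - K with hMdef
  clear_value A M
  have hMcast : ((j - k : ℕ) : ℝ) = M := by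
    rw [hMdef, hJdef, hKdef, Nat.cast_sub hkj]
  have hM0 : 0 ≤ M := by linarith
  have hA : A = (M+1)^(1-α) - M^(1-α) := by
    rw [hAdef, L1a, hMcast]
  have hApos : 0 < A := by rw [hAdef]; exact L1a_pos hα1 _
  have hAgJ : (1-α) * J^(-α) < A := by
    rw [hA]
    exact slope_gt hα hα1 hM0 (by rw [hMdef]; linarith)
  set σ := ((1-α)/A)^(α⁻¹) with hσdef
  clear_value σ
  have hfrac : 0 < (1-α)/A := div_pos (by linarith) hApos
  have hσpos : 0 < σ := by rw [hσdef]; exact Real.rpow_pos_of_pos hfrac _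
  have hσα : σ^α = (1-α)/A := by
    rw [hσdef, ← Real.rpow_mul hfrac.le, inv_mul_cancel₀ hα.ne', Real.rpow_one]
  have hσnegα : σ^(-α) = A/(1-α) := by
    rw [Real.rpow_neg hσpos.le, hσα, inv_div]
  have hup : ∀ t : ℝ, σ ≤ t → (1-α) * t^(-α) ≤ A := by
    intro t ht
    have h1 : t^(-α) ≤ σ^(-α) :=
      Real.rpow_le_rpow_of_nonpos hσpos ht (by linarith)
    rw [hσnegα] at h1
    have e : (1-α) * (A/(1-α)) = A := by
      field_simp
      exact div_self (ne_of_gt (by linarith : (0:ℝ) < 1-α))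
    have := mul_le_mul_of_nonneg_left h1 (by linarith : (0:ℝ) ≤ 1-α)
    linarith
  have hdown : ∀ t : ℝ, 0 < t → t ≤ σ → A ≤ (1-α) * t^(-α) := by
    intro t ht htσ
    have h1 : σ^(-α) ≤ t^(-α) :=
      Real.rpow_le_rpow_of_nonpos ht htσ (by linarith)
    rw [hσnegα] at h1
    have e : (1-α) * (A/(1-α)) = A := by
      field_simp
      exact div_self (ne_of_gt (by linarith : (0:ℝ) < 1-α))
    have := mul_le_mul_of_nonneg_left h1 (by linarith : (0:ℝ) ≤ 1-α)
    linarith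
  have hσJ : σ < J := by
    by_contra h
    push_neg at h
    linarith [hdown J hJpos h]
  set c1 := min (J - σ) K with hc1def
  clear_value c1
  have hc1pos : 0 < c1 := by rw [hc1def]; exact lt_min (by linarith) (by linarith)
  set C := α * c1^(α-1) with hCdef
  clear_value C
  have hpt : ∀ u ∈ Set.Ioo (K-1) K,
      0 ≤ (α * u^(α-1) - C) * (A - (1-α)*(J-u)^(-α)) := by
    intro u hu
    obtain ⟨hu1, hu2⟩ := hu
    have hu0 : 0 < u := by linarith
    rcases le_or_gt u c1 with hc | hc
    · apply mul_nonneg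
      · have h1 : c1^(α-1) ≤ u^(α-1) :=
          Real.rpow_le_rpow_of_nonpos hu0 hc (by linarith)
        have := mul_le_mul_of_nonneg_left h1 hα.le
        rw [hCdef]; linarith
      · have h2 : σ ≤ J - u := by
          have := min_le_left (J-σ) K; rw [← hc1def] at this; linarith
        linarith [hup (J-u) h2]
    · have hc1K : J - σ < K := by
        by_contra h
        push_neg at h
        have : c1 = K := by rw [hc1def]; exact min_eq_right h
        rw [this] at hc; linarith
      have hc1eq : c1 = J - σ := by rw [hc1def]; exact min_eq_left (le_of_lt hc1K)
      have hJu : 0 < J - u := by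
        rcases eq_or_lt_of_le hKJ with hKJ' | hKJ'
        · rw [hc1eq] at hc; linarith
        · linarith
      have h3 : J - u ≤ σ := by rw [hc1eq] at hc; linarith
      have h4 : A ≤ (1-α)*(J-u)^(-α) := hdown (J-u) hJu h3
      have h5 : u^(α-1) ≤ c1^(α-1) :=
        Real.rpow_le_rpow_of_nonpos hc1pos (le_of_lt hc) (by linarith)
      rw [hCdef]
      have e1 : α * u^(α-1) - α * c1^(α-1) ≤ 0 := by
        have := mul_le_mul_of_nonneg_left h5 hα.le
        linarith
      have e2 : A - (1-α)*(J-u)^(-α) ≤ 0 := by linarith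
      have e3 := mul_nonneg (neg_nonneg.2 e1) (neg_nonneg.2 e2)
      rwa [neg_mul_neg] at e3
  -- integrability
  have hsub : Set.uIcc (K-1) K ⊆ Set.uIcc 0 J := by
    rw [Set.uIcc_of_le (by linarith : K-1 ≤ K), Set.uIcc_of_le (by linarith : (0:ℝ) ≤ J)]
    exact Set.Icc_subset_Icc (by linarith) (by linarith)
  have hj1 : 1 ≤ j := le_trans hk hkj
  have Ifg : IntervalIntegrable (fun u => (α * u^(α-1)) * ((1-α)*(J-u)^(-α)))
      volume (K-1) K := by
    have h0 := (integrable_fg hα hα1 j hj1).mono_set hsub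
    have e : (fun u => (α * u^(α-1)) * ((1-α)*(J-u)^(-α)))
        = fun u => (α*(1-α)) * (u^(α-1) * (J-u)^(-α)) := by funext u; ring
    rw [e]
    exact h0.const_mul _
  have If : IntervalIntegrable (fun u => α * u^(α-1)) volume (K-1) K :=
    (intervalIntegrable_rpow' (by linarith)).const_mul α
  have Ig : IntervalIntegrable (fun u => (1-α) * (J-u)^(-α)) volume (K-1) K := by
    have base : IntervalIntegrable (fun s : ℝ => s^(-α)) volume (J-(K-1)) (J-K) :=
      intervalIntegrable_rpow' (by linarith)
    have comp := base.comp_sub_left J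
    rw [show J - (J-(K-1)) = K-1 from by ring, show J - (J-K) = K from by ring] at comp
    exact comp.const_mul _
  have hgint : (∫ u in (K-1)..K, (1-α) * (J-u)^(-α)) = A := by
    have h1 := intervalIntegral.integral_comp_sub_left
      (a := K-1) (b := K) (fun s => (1-α) * s^(-α)) J
    rw [h1, int_g hα hα1, hA]
    have e1 : J - (K-1) = M + 1 := by rw [hMdef]; ring
    rw [e1, ← hMdef]
  have hzero : (∫ u in (K-1)..K, (A - (1-α)*(J-u)^(-α))) = 0 := by
    rw [intervalIntegral.integral_sub intervalIntegrable_const Ig, hgint,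
      intervalIntegral.integral_const]
    rw [show K - (K-1) = 1 from by ring]
    simp
  have hmain : 0 ≤ ∫ u in (K-1)..K, (α*u^(α-1) - C) * (A - (1-α)*(J-u)^(-α)) := by
    apply intervalIntegral.integral_nonneg_of_ae_restrict (by linarith : K-1 ≤ K)
    refine MeasureTheory.ae_restrict_of_ae_eq_of_ae_restrict MeasureTheory.Ioo_ae_eq_Icc ?_
    rw [MeasureTheory.ae_restrict_iff' measurableSet_Ioo]
    exact MeasureTheory.ae_of_all _ hpt
  have hint2 : IntervalIntegrable (fun u => (α*u^(α-1)) * (A - (1-α)*(J-u)^(-α)))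
      volume (K-1) K := by
    have e : (fun u => (α*u^(α-1)) * (A - (1-α)*(J-u)^(-α)))
        = fun u => (α*u^(α-1)) * A - (α*u^(α-1)) * ((1-α)*(J-u)^(-α)) := by funext u; ring
    rw [e]; exact (If.mul_const A).sub Ifg
  have hint3 : IntervalIntegrable (fun u => C * (A - (1-α)*(J-u)^(-α))) volume (K-1) K :=
    (intervalIntegrable_const.sub Ig).const_mul C
  have hexp : (fun u => (α*u^(α-1) - C) * (A - (1-α)*(J-u)^(-α)))
      = fun u => (α*u^(α-1)) * (A - (1-α)*(J-u)^(-α)) - C * (A - (1-α)*(J-u)^(-α)) := by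
    funext u; ring
  rw [hexp, intervalIntegral.integral_sub hint2 hint3,
    intervalIntegral.integral_const_mul, hzero, mul_zero, sub_zero] at hmain
  have hexp2 : (fun u => (α*u^(α-1)) * (A - (1-α)*(J-u)^(-α)))
      = fun u => (α*u^(α-1)) * A - (α*u^(α-1)) * ((1-α)*(J-u)^(-α)) := by funext u; ring
  rw [hexp2, intervalIntegral.integral_sub (If.mul_const A) Ifg,
    intervalIntegral.integral_mul_const, int_f hα hα1] at hmain
  linarith


lemma Sj_ge (hα : 0 < α) (hα1 : α < 1) (j : ℕ) (hj : 1 ≤ j) :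
    Real.Gamma (1+α) * Real.Gamma (2-α)
      ≤ ∑ k ∈ Finset.Icc 1 j, L1a α (j-k) * ((k:ℝ)^α - ((k:ℝ)-1)^α) := by
  have hJ : (0:ℝ) < (j:ℝ) := by exact_mod_cast hj
  have hg1 : Real.Gamma (1+α) = α * Real.Gamma α := by
    rw [show (1+α : ℝ) = α + 1 from by ring, Real.Gamma_add_one hα.ne']
  have hg2 : Real.Gamma (2-α) = (1-α) * Real.Gamma (1-α) := by
    rw [show (2-α : ℝ) = (1-α) + 1 from by ring,
      Real.Gamma_add_one (sub_ne_zero.mpr (by linarith : (1:ℝ) ≠ α))]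
  have htot : (∫ u in (0:ℝ)..(j:ℝ), (α * u^(α-1)) * ((1-α) * ((j:ℝ)-u)^(-α)))
      = Real.Gamma (1+α) * Real.Gamma (2-α) := by
    have e : (fun u => (α * u^(α-1)) * ((1-α) * ((j:ℝ)-u)^(-α)))
        = fun u => (α*(1-α)) * (u^(α-1) * ((j:ℝ)-u)^(-α)) := by funext u; ring
    rw [e, intervalIntegral.integral_const_mul, scale hα hα1 j hj, beta_eval hα hα1,
      hg1, hg2]
    ring
  have hint : ∀ m : ℕ, m < j → IntervalIntegrable
      (fun u => (α * u^(α-1)) * ((1-α) * ((j:ℝ)-u)^(-α))) volume (m:ℝ) ((m:ℝ)+1) := by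
    intro m hm
    have hm1 : ((m:ℝ))+1 ≤ (j:ℝ) := by exact_mod_cast hm
    have hsub : Set.uIcc ((m:ℝ)) ((m:ℝ)+1) ⊆ Set.uIcc 0 (j:ℝ) := by
      rw [Set.uIcc_of_le (by linarith : (m:ℝ) ≤ (m:ℝ)+1),
        Set.uIcc_of_le (by linarith : (0:ℝ) ≤ (j:ℝ))]
      exact Set.Icc_subset_Icc (by positivity) hm1
    have h0 := (integrable_fg hα hα1 j hj).mono_set hsub
    have e : (fun u => (α * u^(α-1)) * ((1-α) * ((j:ℝ)-u)^(-α)))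
        = fun u => (α*(1-α)) * (u^(α-1) * ((j:ℝ)-u)^(-α)) := by funext u; ring
    rw [e]; exact h0.const_mul _
  have hsplit := intervalIntegral.sum_integral_adjacent_intervals
    (a := fun m : ℕ => (m:ℝ)) (n := j)
    (f := fun u => (α * u^(α-1)) * ((1-α) * ((j:ℝ)-u)^(-α)))
    (by intro m hm; push_cast; exact hint m hm)
  simp only [Nat.cast_zero] at hsplit
  calc Real.Gamma (1+α) * Real.Gamma (2-α)
      = ∑ m ∈ Finset.range j,
          ∫ u in ((m:ℕ):ℝ)..(((m+1:ℕ)):ℝ), (α * u^(α-1)) * ((1-α) * ((j:ℝ)-u)^(-α)) := by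
        rw [hsplit, htot]
    _ = ∑ k ∈ Finset.Icc 1 j,
          ∫ u in ((k:ℝ)-1)..(k:ℝ), (α * u^(α-1)) * ((1-α) * ((j:ℝ)-u)^(-α)) := by
        apply Finset.sum_nbij' (fun m => m + 1) (fun k => k - 1)
        · intro m hm; simp only [Finset.mem_range] at hm; simp [Finset.mem_Icc]; omega
        · intro k hk; simp only [Finset.mem_Icc] at hk; simp [Finset.mem_range]; omega
        · intro m hm; omega
        · intro k hk; simp only [Finset.mem_Icc] at hk; omega
        · intro m hm
          have e1 : (((m+1:ℕ)):ℝ) - 1 = ((m:ℕ):ℝ) := by push_cast; ring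
          rw [← e1]
    _ ≤ ∑ k ∈ Finset.Icc 1 j, L1a α (j-k) * ((k:ℝ)^α - ((k:ℝ)-1)^α) := by
        apply Finset.sum_le_sum
        intro k hk
        simp only [Finset.mem_Icc] at hk
        have := piece hα hα1 j k hk.1 hk.2
        linarith [this]

lemma telescope (hα : 0 < α) (n : ℕ) :
    ∑ k ∈ Finset.Icc 1 n, ((k:ℝ)^α - ((k:ℝ)-1)^α) = (n:ℝ)^α := by
  induction n with
  | zero => simp [Real.zero_rpow hα.ne']
  | succ n ih =>
    rw [Finset.sum_Icc_succ_top (by omega : 1 ≤ n+1), ih]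
    push_cast
    rw [show ((n:ℝ)+1-1) = (n:ℝ) from by ring]
    ring

/-- Γ(2-α) Σ_{j=1}^{n} p_{n-j} ≤ n^α / Γ(1+α) for every n ≥ 1. -/
theorem L1p_sum_bound (α : ℝ) (hα : 0 < α) (hα1 : α < 1) (n : ℕ) (hn : 1 ≤ n) :
    Real.Gamma (2 - α) * ∑ j ∈ Finset.Icc 1 n, L1p α (n - j) ≤
      (n : ℝ) ^ α / Real.Gamma (1 + α) := by
  have hΓ1 : 0 < Real.Gamma (1+α) := Real.Gamma_pos_of_pos (by linarith)
  have key : Real.Gamma (1+α) * Real.Gamma (2-α) * ∑ j ∈ Finset.Icc 1 n, L1p α (n-j)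
      ≤ (n:ℝ)^α := by
    have h1 : ∀ j ∈ Finset.Icc 1 n,
        Real.Gamma (1+α) * Real.Gamma (2-α) * L1p α (n-j)
          ≤ L1p α (n-j) * ∑ k ∈ Finset.Icc 1 j,
              L1a α (j-k) * ((k:ℝ)^α - ((k:ℝ)-1)^α) := by
      intro j hj
      simp only [Finset.mem_Icc] at hj
      have h2 := mul_le_mul_of_nonneg_left (Sj_ge hα hα1 j hj.1) (L1p_nonneg hα hα1 (n-j))
      exact le_trans (le_of_eq (by ring)) h2
    calc Real.Gamma (1+α) * Real.Gamma (2-α) * ∑ j ∈ Finset.Icc 1 n, L1p α (n-j)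
        = ∑ j ∈ Finset.Icc 1 n, Real.Gamma (1+α) * Real.Gamma (2-α) * L1p α (n-j) := by
          rw [Finset.mul_sum]
      _ ≤ ∑ j ∈ Finset.Icc 1 n, L1p α (n-j) * ∑ k ∈ Finset.Icc 1 j,
            L1a α (j-k) * ((k:ℝ)^α - ((k:ℝ)-1)^α) := Finset.sum_le_sum h1
      _ = ∑ k ∈ Finset.Icc 1 n, ((k:ℝ)^α - ((k:ℝ)-1)^α) :=
          exchange hα1 n hn (fun k => (k:ℝ)^α - ((k:ℝ)-1)^α)
      _ = (n:ℝ)^α := telescope hα n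
  rw [le_div_iff₀ hΓ1]
  calc Real.Gamma (2-α) * (∑ j ∈ Finset.Icc 1 n, L1p α (n-j)) * Real.Gamma (1+α)
      = Real.Gamma (1+α) * Real.Gamma (2-α) * ∑ j ∈ Finset.Icc 1 n, L1p α (n-j) := by ring
    _ ≤ (n:ℝ)^α := key
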